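/- Let k, ℓ be natural numbers, let T be a finite simple graph that is connected with |E(T)| ≤ |V(T)| − 1 + ℓ (i.e., T ∈ T_ℓ), let G be a finite simple graph, and let φ be a T-witness structure of G with Σ_{t ∈ V(T)} (|φ⁻¹(t)| − 1) ≤ k (so G is k-contractible to T via φ). Let X, U ⊆ V(G) be such that U is an independent set in G, every vertex v ∈ U satisfies X ⊆ N_G(v), and |U| ≥ k + ℓ + 2. Then there exists a vertex t ∈ V(T) such that X ⊆ φ⁻¹(t). -/

import Mathlib

/-- `φ` is a `T`-witness structure of `G`: a surjective map such that every witness set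
`W(t) = φ⁻¹(t)` induces a connected subgraph of `G`, and distinct `t, t'` are adjacent in `T`
iff there is an edge of `G` between the corresponding witness sets. -/
def IsWitnessStructure {V W : Type} (G : SimpleGraph V) (T : SimpleGraph W) (φ : V → W) : Prop :=
  Function.Surjective φ ∧
  (∀ t : W, (G.induce {v | φ v = t}).Connected) ∧
  (∀ t t' : W, t ≠ t' → (T.Adj t t' ↔ ∃ u u' : V, φ u = t ∧ φ u' = t' ∧ G.Adj u u'))

/-- A connected graph on `n` vertices has at least `n - 1` edges. -/
lemma aux_card_le_ncard_edgeSet_add_one {W : Type} [Fintype W] {T : SimpleGraph W}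
    (h : T.Connected) : Fintype.card W ≤ T.edgeSet.ncard + 1 := by
  classical
  obtain ⟨root⟩ := h.nonempty
  have key : ∀ w : W, w ≠ root → ∃ x : W, T.Adj w x ∧ T.dist x root + 1 = T.dist w root := by
    intro w hw
    obtain ⟨p, hp⟩ := (h w root).exists_walk_length_eq_dist
    cases p with
    | nil => exact absurd rfl hw
    | @cons _ x _ hadj q =>
      refine ⟨x, hadj, ?_⟩
      have h1 : T.dist x root ≤ q.length := SimpleGraph.dist_le q
      have h2 : T.dist w root ≤ T.dist x root + 1 := by
        obtain ⟨q', hq'⟩ := (h x root).exists_walk_length_eq_dist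
        have := SimpleGraph.dist_le (SimpleGraph.Walk.cons hadj q')
        simpa [hq'] using this
      simp only [SimpleGraph.Walk.length_cons] at hp
      omega
  choose! nxt hadj hdist using key
  have hmaps : ∀ w ∈ ({root}ᶜ : Finset W), s(w, nxt w) ∈ T.edgeSet.toFinset := by
    intro w hw
    have hw' : w ≠ root := by simpa using hw
    simpa [Set.mem_toFinset] using hadj w hw'
  have hinj : Set.InjOn (fun w => s(w, nxt w)) ↑({root}ᶜ : Finset W) := by
    intro a ha b hb hab
    have ha' : a ≠ root := by simpa using ha
    have hb' : b ≠ root := by simpa using hb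
    rcases Sym2.eq_iff.mp hab with ⟨h1, _⟩ | ⟨h1, h2⟩
    · exact h1
    · have da := hdist a ha'
      have db := hdist b hb'
      rw [h2] at da
      rw [← h1] at db
      omega
  have hcard := Finset.card_le_card_of_injOn _ hmaps hinj
  have hc : ({root}ᶜ : Finset W).card = Fintype.card W - 1 := by
    simp [Finset.card_compl]
  have hpos : 0 < Fintype.card W := Fintype.card_pos_iff.mpr ⟨root⟩
  rw [Set.ncard_eq_toFinset_card']
  omega

/-- Connectivity survives passing to a graph in which endpoints of every edge
are still reachable. -/
lemma aux_connected_of_adj_reachable {W : Type} {T T' : SimpleGraph W}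
    (h : T.Connected) (hab : ∀ a b, T.Adj a b → T'.Reachable a b) : T'.Connected := by
  have key : ∀ x y : W, T.Reachable x y → T'.Reachable x y := by
    intro x y hr
    obtain ⟨p⟩ := hr
    induction p with
    | nil => exact SimpleGraph.Reachable.refl _
    | cons ha _ ih => exact (hab _ _ ha).trans ih
  haveI := h.nonempty
  exact SimpleGraph.Connected.mk (fun x y => key x y (h x y))

/-- Let `G` be `k`-contractible to `T ∈ 𝕋_ℓ` via `φ`.  If `U` is an independent set of at
least `k + ℓ + 2` vertices of `G`, each of which has `X` in its neighbourhood, then `X` is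
contained in a single witness set. -/
theorem common_neighborhood_in_one_witness_set {V W : Type} [Fintype V] [Fintype W]
    (G : SimpleGraph V) (T : SimpleGraph W) (k ℓ : ℕ)
    (hTconn : T.Connected) (hTedges : T.edgeSet.ncard ≤ Fintype.card W - 1 + ℓ)
    (φ : V → W) (hφ : IsWitnessStructure G T φ)
    (hk : ∑ t : W, ({v : V | φ v = t}.ncard - 1) ≤ k)
    (X U : Set V)
    (hindep : ∀ u ∈ U, ∀ u' ∈ U, ¬ G.Adj u u')
    (hXnbr : ∀ v ∈ U, X ⊆ G.neighborSet v)
    (hU : k + ℓ + 2 ≤ U.ncard) :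
    ∃ t : W, X ⊆ {v : V | φ v = t} := by
  classical
  obtain ⟨hsurj, hconnW, hadjiff⟩ := hφ
  by_contra hcon
  push_neg at hcon
  simp only [Set.not_subset] at hcon
  obtain ⟨troot⟩ := hTconn.nonempty
  obtain ⟨x₁, hx₁X, -⟩ := hcon troot
  obtain ⟨x₂, hx₂X, hx₂⟩ := hcon (φ x₁)
  have ht21 : φ x₂ ≠ φ x₁ := hx₂
  set t₁ := φ x₁ with ht₁def
  set t₂ := φ x₂ with ht₂def
  have hadj1 : ∀ u ∈ U, G.Adj u x₁ := fun u hu => hXnbr u hu hx₁X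
  have hadj2 : ∀ u ∈ U, G.Adj u x₂ := fun u hu => hXnbr u hu hx₂X
  have hx1U : x₁ ∉ U := fun h => (hadj1 x₁ h).ne rfl
  have hx2U : x₂ ∉ U := fun h => (hadj2 x₂ h).ne rfl
  set UF : Finset V := U.toFinset with hUFdef
  have hUcard : k + ℓ + 2 ≤ UF.card := by rwa [Set.ncard_eq_toFinset_card'] at hU
  set I := UF.image φ with hIdef
  set S := I \ {t₁, t₂} with hSdef
  set m := S.card with hmdef
  -- every t ∈ S is adjacent to both t₁ and t₂
  have hSprop : ∀ t ∈ S, t ≠ t₁ ∧ t ≠ t₂ ∧ T.Adj t t₁ ∧ T.Adj t t₂ := by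
    intro t ht
    rw [hSdef, Finset.mem_sdiff] at ht
    obtain ⟨htI, htne⟩ := ht
    have hne1 : t ≠ t₁ := fun h => htne (by simp [h])
    have hne2 : t ≠ t₂ := fun h => htne (by simp [h])
    obtain ⟨u, huUF, hut⟩ := Finset.mem_image.mp htI
    have huU : u ∈ U := Set.mem_toFinset.mp huUF
    exact ⟨hne1, hne2,
      (hadjiff t t₁ hne1).mpr ⟨u, x₁, hut, rfl, hadj1 u huU⟩,
      (hadjiff t t₂ hne2).mpr ⟨u, x₂, hut, rfl, hadj2 u huU⟩⟩
  -- counting: |U| ≤ k + m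
  have hfib : UF.card = ∑ t ∈ I, (UF.filter (fun v => φ v = t)).card :=
    Finset.card_eq_sum_card_image φ UF
  have hbound : ∀ t ∈ I, (UF.filter (fun v => φ v = t)).card ≤
      ({v : V | φ v = t}.ncard - 1) + (if t ∈ ({t₁, t₂} : Finset W) then 0 else 1) := by
    intro t htI
    by_cases h12 : t ∈ ({t₁, t₂} : Finset W)
    · -- the fiber misses x₁ (resp. x₂)
      obtain ⟨x, hxφ, hxU⟩ : ∃ x : V, φ x = t ∧ x ∉ U := by
        rcases Finset.mem_insert.mp h12 with h | h
        · exact ⟨x₁, h.symm, hx1U⟩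
        · exact ⟨x₂, (Finset.mem_singleton.mp h).symm, hx2U⟩
      have hsub : UF.filter (fun v => φ v = t) ⊆ ({v : V | φ v = t}.toFinset).erase x := by
        intro v hv
        rw [Finset.mem_filter] at hv
        refine Finset.mem_erase.mpr ⟨?_, ?_⟩
        · rintro rfl; exact hxU (Set.mem_toFinset.mp hv.1)
        · rw [Set.mem_toFinset]; exact hv.2
      calc (UF.filter (fun v => φ v = t)).card
          ≤ (({v : V | φ v = t}.toFinset).erase x).card := Finset.card_le_card hsub
        _ = {v : V | φ v = t}.toFinset.card - 1 :=
            Finset.card_erase_of_mem (by rw [Set.mem_toFinset]; exact hxφ)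
        _ = {v : V | φ v = t}.ncard - 1 := by rw [Set.ncard_eq_toFinset_card']
        _ ≤ _ := Nat.le_add_right _ _
    · have hsub : UF.filter (fun v => φ v = t) ⊆ {v : V | φ v = t}.toFinset := by
        intro v hv
        rw [Finset.mem_filter] at hv
        rw [Set.mem_toFinset]; exact hv.2
      have hpos : 1 ≤ {v : V | φ v = t}.ncard := by
        obtain ⟨u, hut⟩ := hsurj t
        have : ({v : V | φ v = t}).Nonempty := ⟨u, hut⟩
        have := (Set.ncard_pos (Set.toFinite _)).mpr this
        omega
      have hle : (UF.filter (fun v => φ v = t)).card ≤ {v : V | φ v = t}.ncard := by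
        rw [Set.ncard_eq_toFinset_card']
        exact Finset.card_le_card hsub
      simp only [h12, if_false]
      omega
  have hsum1 : ∑ t ∈ I, (({v : V | φ v = t}.ncard - 1) +
      (if t ∈ ({t₁, t₂} : Finset W) then 0 else 1)) ≤ k + m := by
    rw [Finset.sum_add_distrib]
    have hA : ∑ t ∈ I, ({v : V | φ v = t}.ncard - 1) ≤ k := by
      refine le_trans ?_ hk
      exact Finset.sum_le_sum_of_subset (Finset.subset_univ I)
    have hB : ∑ t ∈ I, (if t ∈ ({t₁, t₂} : Finset W) then 0 else 1) = m := by
      rw [Finset.sum_ite, Finset.sum_const, Finset.sum_const]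
      simp only [smul_eq_mul, mul_zero, mul_one, zero_add]
      congr 1
      simp [hSdef, Finset.sdiff_eq_filter]
    omega
  have hUm : UF.card ≤ k + m := by
    calc UF.card = ∑ t ∈ I, (UF.filter (fun v => φ v = t)).card := hfib
      _ ≤ ∑ t ∈ I, (({v : V | φ v = t}.ncard - 1) +
          (if t ∈ ({t₁, t₂} : Finset W) then 0 else 1)) := Finset.sum_le_sum hbound
      _ ≤ k + m := hsum1
  have hmge : ℓ + 2 ≤ m := by omega
  obtain ⟨t₀, ht₀⟩ : S.Nonempty := Finset.card_pos.mp (by omega)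
  -- delete the m-1 edges s(t, t₂) for t ∈ S.erase t₀
  set D : Finset (Sym2 W) := (S.erase t₀).image (fun t => s(t, t₂)) with hDdef
  have hDcard : D.card = m - 1 := by
    rw [hDdef, Finset.card_image_of_injective _ ?hinj, Finset.card_erase_of_mem ht₀]
    case hinj =>
      intro a b hab
      rcases Sym2.eq_iff.mp hab with ⟨h1, _⟩ | ⟨h1, h2⟩
      · exact h1
      · exact h1.trans h2
  set T' := T.deleteEdges ↑D with hT'def
  have hnotD1 : ∀ a : W, s(a, t₁) ∉ D := by
    intro a he
    rw [hDdef, Finset.mem_image] at he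
    obtain ⟨t, htS, heq⟩ := he
    have htS' := Finset.mem_of_mem_erase htS
    rcases Sym2.eq_iff.mp heq with ⟨_, h2⟩ | ⟨h1, _⟩
    · exact ht21 h2
    · exact (hSprop t htS').1 h1
  have ht₀notD : s(t₀, t₂) ∉ D := by
    intro he
    rw [hDdef, Finset.mem_image] at he
    obtain ⟨t, htS, heq⟩ := he
    rcases Sym2.eq_iff.mp heq with ⟨h1, _⟩ | ⟨h1, _⟩
    · exact (Finset.ne_of_mem_erase htS) h1
    · exact (hSprop t (Finset.mem_of_mem_erase htS)).2.1 h1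
  have hS2reach : ∀ t ∈ S.erase t₀, T'.Reachable t t₂ := by
    intro t ht
    have htS := Finset.mem_of_mem_erase ht
    have h1 : T'.Adj t t₁ := by
      rw [hT'def, SimpleGraph.deleteEdges_adj]
      exact ⟨(hSprop t htS).2.2.1, by simpa using hnotD1 t⟩
    have h2 : T'.Adj t₀ t₁ := by
      rw [hT'def, SimpleGraph.deleteEdges_adj]
      exact ⟨(hSprop t₀ ht₀).2.2.1, by simpa using hnotD1 t₀⟩
    have h3 : T'.Adj t₀ t₂ := by
      rw [hT'def, SimpleGraph.deleteEdges_adj]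
      exact ⟨(hSprop t₀ ht₀).2.2.2, by simpa using ht₀notD⟩
    exact h1.reachable.trans (h2.reachable.symm.trans h3.reachable)
  have hreach : ∀ a b, T.Adj a b → T'.Reachable a b := by
    intro a b hab
    by_cases hmem : s(a, b) ∈ D
    · have hm := hmem
      rw [hDdef, Finset.mem_image] at hm
      obtain ⟨t, htS, heq⟩ := hm
      rcases Sym2.eq_iff.mp heq with ⟨h1, h2⟩ | ⟨h1, h2⟩
      · rw [← h1, ← h2]; exact hS2reach t htS
      · rw [← h1, ← h2]; exact (hS2reach t htS).symm
    · exact (SimpleGraph.deleteEdges_adj.mpr ⟨hab, by simpa using hmem⟩).reachable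
  have hT'conn : T'.Connected := aux_connected_of_adj_reachable hTconn hreach
  have hT'card : Fintype.card W ≤ T'.edgeSet.ncard + 1 := aux_card_le_ncard_edgeSet_add_one hT'conn
  have hDsub : (↑D : Set (Sym2 W)) ⊆ T.edgeSet := by
    intro e he
    rw [Finset.mem_coe, hDdef, Finset.mem_image] at he
    obtain ⟨t, htS, rfl⟩ := he
    exact (hSprop t (Finset.mem_of_mem_erase htS)).2.2.2
  have hcount : T'.edgeSet.ncard + (m - 1) = T.edgeSet.ncard := by
    have hE : T'.edgeSet = T.edgeSet \ ↑D := by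
      rw [hT'def]; exact SimpleGraph.edgeSet_deleteEdges (↑D : Set (Sym2 W))
    rw [hE, ← hDcard, ← Set.ncard_coe_finset D]
    exact Set.ncard_diff_add_ncard_of_subset hDsub (Set.toFinite _)
  have hWpos : 0 < Fintype.card W := Fintype.card_pos_iff.mpr ⟨troot⟩
  omega
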